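/- Let n ∈ ℕ, let B, C, X be n×n complex matrices with X² + B·X + C = 0, let λ₀ ∈ ℂ, and let x₀, x₁, …, x_k ∈ ℂⁿ with x₀ ≠ 0 be a Jordan chain for the matrix X corresponding to λ₀, i.e. X·x₀ = λ₀·x₀ and X·xᵢ = λ₀·xᵢ + x_{i−1} for i = 1, …, k. Then, setting x₋₁ = x₋₂ = 0, the vectors x₀, …, x_k satisfy L(λ₀)·xᵢ + (2λ₀·1 + B)·x_{i−1} + x_{i−2} = 0 for all i = 0, 1, …, k, i.e. they form a Jordan chain for the pencil L(λ) = λ²·1 + λ·B + C corresponding to the same λ₀. -/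
import Mathlib


/-- a Jordan chain `x₀, …, x_k` of a right solvent `X` at `λ₀` is a Jordan chain
of the pencil `L(λ) = λ²·1 + λ·B + C` at the same `λ₀` (with the conventions
`x₋₁ = x₋₂ = 0`). -/
theorem jordan_chain_of_solvent_is_jordan_chain_of_pencil (n k : ℕ)
    (B C X : Matrix (Fin n) (Fin n) ℂ) (hX : X ^ 2 + B * X + C = 0)
    (lam : ℂ) (x : ℕ → (Fin n → ℂ)) (hx0 : x 0 ≠ 0)
    (xx : ℤ → (Fin n → ℂ))
    (hxx : ∀ i : ℤ, xx i = if 0 ≤ i ∧ i ≤ (k : ℤ) then x i.toNat else 0)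
    (hchain0 : X.mulVec (x 0) = lam • x 0)
    (hchain : ∀ i : ℕ, 1 ≤ i → i ≤ k → X.mulVec (x i) = lam • x i + x (i - 1)) :
    ∀ i : ℤ, 0 ≤ i → i ≤ (k : ℤ) →
      ((lam ^ 2) • (1 : Matrix (Fin n) (Fin n) ℂ) + lam • B + C).mulVec (xx i) +
        ((2 * lam) • (1 : Matrix (Fin n) (Fin n) ℂ) + B).mulVec (xx (i - 1)) +
        xx (i - 2) = 0 := by
  have hstep : ∀ i : ℤ, i ≤ (k : ℤ) → X.mulVec (xx i) = lam • xx i + xx (i - 1) := by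
    intro i hi
    rcases lt_trichotomy i 0 with h | h | h
    · rw [hxx i, hxx (i - 1), if_neg (by omega), if_neg (by omega)]
      simp
    · subst h
      rw [hxx 0, hxx (0 - 1), if_pos (by omega), if_neg (by omega)]
      simpa using hchain0
    · rw [hxx i, hxx (i - 1), if_pos (by omega), if_pos (by omega)]
      have := hchain i.toNat (by omega) (by omega)
      rw [show (i - 1).toNat = i.toNat - 1 by omega]
      exact this
  intro i h0 hk
  have h1 := hstep i hk
  have h2 := hstep (i - 1) (by omega)
  have key := congrArg (fun M => M.mulVec (xx i)) hX
  simp only [pow_two, ← Matrix.mulVec_mulVec, Matrix.add_mulVec, Matrix.zero_mulVec,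
    h1, Matrix.mulVec_add, Matrix.mulVec_smul, h2, Matrix.smul_mulVec,
    Matrix.one_mulVec, show i - 1 - 1 = i - 2 by ring] at key ⊢
  linear_combination (norm := module) key
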